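/- Theorem (Kirch density): the set of prime numbers is dense in the positive integers equipped with the Kirch topology (the topology generated by the arithmetic progressions A(h,p) with p prime and gcd(h,p)=1 as a subbasis). -/
import Mathlib


def PosNat : Type := {n : ℕ // 0 < n}

def Ap (h p : ℕ) : Set PosNat := {m | ∃ n : ℕ, m.val = p * n + h}

noncomputable def kirch : TopologicalSpace PosNat :=
  TopologicalSpace.generateFrom
    {S | ∃ p h : ℕ, p.Prime ∧ Nat.gcd h p = 1 ∧ S = Ap h p}

lemma kirch_open_tail {U : Set PosNat}
    (hU : TopologicalSpace.GenerateOpen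
      {S | ∃ p h : ℕ, p.Prime ∧ Nat.gcd h p = 1 ∧ S = Ap h p} U) :
    ∀ x ∈ U, ∃ q : ℕ, 0 < q ∧ Nat.Coprime x.val q ∧
      ∃ N : ℕ, ∀ m : PosNat, N ≤ m.val → m.val % q = x.val % q → m ∈ U := by
  induction hU with
  | basic S hS =>
    rintro x hx
    obtain ⟨p, h, hp, hgcd, rfl⟩ := hS
    obtain ⟨n, hn⟩ := hx
    have hxmod : x.val % p = h % p := by rw [hn, Nat.mul_add_mod]
    refine ⟨p, hp.pos, ?_, h, ?_⟩
    · have : Nat.gcd x.val p = Nat.gcd h p := by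
        rw [Nat.gcd_comm, Nat.gcd_rec p x.val, hxmod, ← Nat.gcd_rec, Nat.gcd_comm]
      rw [Nat.Coprime, this, hgcd]
    · intro m hm hmod
      have hmeq : h % p = m.val % p := by omega
      obtain ⟨k, hk⟩ := (Nat.modEq_iff_dvd' hm).mp hmeq
      exact ⟨k, by omega⟩
  | univ => exact fun x _ => ⟨1, one_pos, Nat.coprime_one_right _, 0, fun _ _ _ => trivial⟩
  | inter U V hU hV ihU ihV =>
    rintro x ⟨hxU, hxV⟩
    obtain ⟨q1, hq1, hc1, N1, h1⟩ := ihU x hxU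
    obtain ⟨q2, hq2, hc2, N2, h2⟩ := ihV x hxV
    refine ⟨q1 * q2, Nat.mul_pos hq1 hq2, Nat.Coprime.mul_right hc1 hc2, max N1 N2,
      fun m hm hmod => ?_⟩
    have hmq : Nat.ModEq (q1 * q2) m.val x.val := hmod
    exact ⟨h1 m (le_trans (le_max_left _ _) hm) (hmq.of_dvd ⟨q2, rfl⟩),
      h2 m (le_trans (le_max_right _ _) hm) (hmq.of_dvd ⟨q1, mul_comm _ _⟩)⟩
  | sUnion S hS ih =>
    rintro x ⟨s, hs, hxs⟩
    obtain ⟨q, hq, hc, N, h⟩ := ih s hs x hxs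
    exact ⟨q, hq, hc, N, fun m hm hmod => ⟨s, hs, h m hm hmod⟩⟩

theorem stmt_18 : @Dense PosNat kirch {q : PosNat | Nat.Prime q.val} := by
  letI : TopologicalSpace PosNat := kirch
  intro x
  rw [mem_closure_iff]
  intro U hUopen hxU
  obtain ⟨q, hq, hc, N, h⟩ := kirch_open_tail hUopen x hxU
  haveI : NeZero q := ⟨hq.ne'⟩
  have hunit : IsUnit ((x.val : ℕ) : ZMod q) := by
    rw [ZMod.isUnit_iff_coprime]; exact hc
  obtain ⟨P, hPgt, hPprime, hPmod⟩ := Nat.forall_exists_prime_gt_and_eq_mod hunit N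
  have hmodeq : P % q = x.val % q :=
    (ZMod.natCast_eq_natCast_iff _ _ _).mp hPmod
  exact ⟨⟨P, hPprime.pos⟩, h ⟨P, hPprime.pos⟩ (le_of_lt hPgt) hmodeq, hPprime⟩
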